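/- arXiv:1903.08731 — 4 statements merged into one kernel-verified Lean document; each statement's English description precedes it below -/
import Mathlib

section
/- The integral ∫_ℝ (sin(2πξ)/(πξ))^2 · χ_{{ξ : sin(2πξ)/(πξ) ≤ 0}}(ξ) dξ is at least 1/10, i.e., the L^2 mass of the sinc function sin(2πξ)/(πξ) over the set where it is nonpositive is at least 0.1. -/
open MeasureTheory Real Set



noncomputable def sincSq (ξ : ℝ) : ℝ := (Real.sin (2 * Real.pi * ξ) / (Real.pi * ξ)) ^ 2

lemma sincSq_nonneg (ξ : ℝ) : 0 ≤ sincSq ξ := sq_nonneg _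

lemma sincSq_even (ξ : ℝ) : sincSq (-ξ) = sincSq ξ := by
  simp [sincSq, mul_neg, neg_div_neg_eq]

lemma sincSq_integrable : Integrable sincSq := by
  have hm : AEStronglyMeasurable sincSq volume := by
    apply Measurable.aestronglyMeasurable
    unfold sincSq
    fun_prop
  apply Integrable.mono' ((integrable_inv_one_add_sq).const_mul 8) hm
  filter_upwards with ξ
  rw [Real.norm_eq_abs, abs_of_nonneg (sincSq_nonneg ξ)]
  rcases le_or_gt |ξ| 1 with h | h
  · rcases eq_or_ne ξ 0 with rfl | hξ
    · simp only [sincSq, mul_zero, div_zero]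
      norm_num
    · have h1 : |Real.sin (2 * Real.pi * ξ)| ≤ |2 * Real.pi * ξ| := Real.abs_sin_le_abs
      have h2 : sincSq ξ ≤ 4 := by
        have hπξ : |Real.pi * ξ| > 0 := by positivity
        have : |Real.sin (2 * Real.pi * ξ) / (Real.pi * ξ)| ≤ 2 := by
          rw [abs_div]
          rw [div_le_iff₀ hπξ]
          calc |Real.sin (2 * Real.pi * ξ)| ≤ |2 * Real.pi * ξ| := h1
            _ = 2 * |Real.pi * ξ| := by rw [mul_assoc, abs_mul]; norm_num
        calc sincSq ξ = |Real.sin (2 * Real.pi * ξ) / (Real.pi * ξ)| ^ 2 := (sq_abs _).symm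
          _ ≤ 2 ^ 2 := by gcongr <;> positivity
          _ = 4 := by norm_num
      have h3 : ξ ^ 2 ≤ 1 := by nlinarith [sq_abs ξ, abs_nonneg ξ]
      calc sincSq ξ ≤ 4 := h2
        _ ≤ 8 * (1 + ξ ^ 2)⁻¹ := by
          rw [le_mul_inv_iff₀ (by positivity)]
          nlinarith
  · have h2 : ξ ^ 2 > 1 := by
      nlinarith [sq_abs ξ, abs_nonneg ξ]
    have hπ : Real.pi > 3 := by linarith [Real.pi_gt_three]
    have hξ2 : (Real.pi * ξ) ^ 2 > ξ ^ 2 := by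
      have h4 : (0:ℝ) < (Real.pi ^ 2 - 1) * ξ ^ 2 := mul_pos (by nlinarith) (by nlinarith)
      rw [mul_pow]; nlinarith
    have : sincSq ξ ≤ 1 / ξ ^ 2 := by
      unfold sincSq
      rw [div_pow, div_le_div_iff₀ (by nlinarith) (by nlinarith)]
      nlinarith [Real.sin_sq_le_one (2 * Real.pi * ξ)]
    calc sincSq ξ ≤ 1 / ξ ^ 2 := this
      _ ≤ 8 * (1 + ξ ^ 2)⁻¹ := by
        rw [div_le_iff₀ (by nlinarith),
          show 8 * (1 + ξ ^ 2)⁻¹ * ξ ^ 2 = 8 * ξ ^ 2 / (1 + ξ ^ 2) by ring,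
          le_div_iff₀ (by positivity)]
        nlinarith



lemma antideriv (x : ℝ) :
    HasDerivAt (fun y => y / 2 - Real.sin (4 * Real.pi * y) / (8 * Real.pi))
      (Real.sin (2 * Real.pi * x) ^ 2) x := by
  have h1 : HasDerivAt (fun y : ℝ => 4 * Real.pi * y) (4 * Real.pi) x := by
    simpa using (hasDerivAt_id x).const_mul (4 * Real.pi)
  have h2 := ((Real.hasDerivAt_sin (4 * Real.pi * x)).comp x h1).div_const (8 * Real.pi)
  have h3 := ((hasDerivAt_id x).div_const 2).sub h2
  refine h3.congr_deriv ?_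
  have hπ : Real.pi ≠ 0 := Real.pi_ne_zero
  rw [Real.sin_sq_eq_half_sub]
  field_simp
  ring_nf


lemma sin_sq_integral (a b : ℝ) :
    ∫ x in a..b, Real.sin (2 * Real.pi * x) ^ 2
      = (b / 2 - Real.sin (4 * Real.pi * b) / (8 * Real.pi))
        - (a / 2 - Real.sin (4 * Real.pi * a) / (8 * Real.pi)) := by
  apply intervalIntegral.integral_eq_sub_of_hasDerivAt (fun x _ => antideriv x)
  apply Continuous.intervalIntegrable
  continuity


lemma piece (a b : ℝ) (ha : 0 < a) (hab : a ≤ b) :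
    ((b / 2 - Real.sin (4 * Real.pi * b) / (8 * Real.pi))
        - (a / 2 - Real.sin (4 * Real.pi * a) / (8 * Real.pi))) / (Real.pi * b) ^ 2
      ≤ ∫ ξ in Set.Ioc a b, sincSq ξ := by
  rw [← intervalIntegral.integral_of_le hab]
  have key : ((b / 2 - Real.sin (4 * Real.pi * b) / (8 * Real.pi))
        - (a / 2 - Real.sin (4 * Real.pi * a) / (8 * Real.pi))) / (Real.pi * b) ^ 2
      = ∫ x in a..b, Real.sin (2 * Real.pi * x) ^ 2 / (Real.pi * b) ^ 2 := by
    rw [intervalIntegral.integral_div, sin_sq_integral]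
  rw [key]
  apply intervalIntegral.integral_mono_on hab
  · apply Continuous.intervalIntegrable; continuity
  · exact sincSq_integrable.intervalIntegrable
  · intro x hx
    have hx0 : 0 < x := lt_of_lt_of_le ha hx.1
    have hxb : x ≤ b := hx.2
    unfold sincSq
    rw [div_pow]
    gcongr
    all_goals nlinarith [Real.pi_pos, mul_pos Real.pi_pos hx0]


lemma hump_neg (a b : ℝ) (hab : a ≤ b) :
    ∫ ξ in Set.Ioc (-b) (-a), sincSq ξ = ∫ ξ in Set.Ioc a b, sincSq ξ := by
  rw [← intervalIntegral.integral_of_le (neg_le_neg hab),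
    ← intervalIntegral.integral_of_le hab, ← intervalIntegral.integral_comp_neg]
  simp only [sincSq_even]

lemma Ioc_split (a b c : ℝ) (hab : a ≤ b) (hbc : b ≤ c) :
    ∫ ξ in Set.Ioc a c, sincSq ξ
      = (∫ ξ in Set.Ioc a b, sincSq ξ) + ∫ ξ in Set.Ioc b c, sincSq ξ := by
  rw [← Set.Ioc_union_Ioc_eq_Ioc hab hbc,
    setIntegral_union (Set.Ioc_disjoint_Ioc_of_le le_rfl) measurableSet_Ioc
      sincSq_integrable.integrableOn sincSq_integrable.integrableOn]

lemma sinA (k : ℤ) : Real.sin (4 * Real.pi * ((k : ℝ) - 1/2)) = 0 := by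
  rw [show 4 * Real.pi * ((k : ℝ) - 1/2) = 0 + ((2*k-1 : ℤ) : ℝ) * (2 * Real.pi) by
    push_cast; ring, Real.sin_add_int_mul_two_pi, Real.sin_zero]

lemma sinB (k : ℤ) : Real.sin (4 * Real.pi * ((k : ℝ) - 3/8)) = 1 := by
  rw [show 4 * Real.pi * ((k : ℝ) - 3/8) = Real.pi/2 + ((2*k-1 : ℤ) : ℝ) * (2 * Real.pi) by
    push_cast; ring, Real.sin_add_int_mul_two_pi, Real.sin_pi_div_two]

lemma sinC (k : ℤ) : Real.sin (4 * Real.pi * ((k : ℝ) - 1/4)) = 0 := by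
  rw [show 4 * Real.pi * ((k : ℝ) - 1/4) = Real.pi + ((2*k-1 : ℤ) : ℝ) * (2 * Real.pi) by
    push_cast; ring, Real.sin_add_int_mul_two_pi, Real.sin_pi]

lemma sinD (k : ℤ) : Real.sin (4 * Real.pi * ((k : ℝ) - 1/8)) = -1 := by
  rw [show 4 * Real.pi * ((k : ℝ) - 1/8) = -(Real.pi/2) + ((2*k : ℤ) : ℝ) * (2 * Real.pi) by
    push_cast; ring, Real.sin_add_int_mul_two_pi, Real.sin_neg, Real.sin_pi_div_two]

lemma sinE (k : ℤ) : Real.sin (4 * Real.pi * (k : ℝ)) = 0 := by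
  rw [show 4 * Real.pi * (k : ℝ) = 0 + ((2*k : ℤ) : ℝ) * (2 * Real.pi) by
    push_cast; ring, Real.sin_add_int_mul_two_pi, Real.sin_zero]

lemma hump_bound4 (k : ℤ) (hk : 1 ≤ k) :
    (1/16 - 1/(8*Real.pi)) / (Real.pi * ((k:ℝ) - 3/8))^2
      + (1/16 + 1/(8*Real.pi)) / (Real.pi * ((k:ℝ) - 1/4))^2
      + (1/16 + 1/(8*Real.pi)) / (Real.pi * ((k:ℝ) - 1/8))^2
      + (1/16 - 1/(8*Real.pi)) / (Real.pi * (k:ℝ))^2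
    ≤ ∫ ξ in Set.Ioc ((k:ℝ) - 1/2) (k:ℝ), sincSq ξ := by
  have hk' : (1:ℝ) ≤ (k:ℝ) := by exact_mod_cast hk
  rw [Ioc_split _ ((k:ℝ) - 3/8) _ (by linarith) (by linarith),
      Ioc_split ((k:ℝ) - 3/8) ((k:ℝ) - 1/4) _ (by linarith) (by linarith),
      Ioc_split ((k:ℝ) - 1/4) ((k:ℝ) - 1/8) _ (by linarith) (by linarith)]
  have p1 := piece ((k:ℝ) - 1/2) ((k:ℝ) - 3/8) (by linarith) (by linarith)
  have p2 := piece ((k:ℝ) - 3/8) ((k:ℝ) - 1/4) (by linarith) (by linarith)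
  have p3 := piece ((k:ℝ) - 1/4) ((k:ℝ) - 1/8) (by linarith) (by linarith)
  have p4 := piece ((k:ℝ) - 1/8) ((k:ℝ)) (by linarith) (by linarith)
  rw [sinA, sinB] at p1
  rw [sinB, sinC] at p2
  rw [sinC, sinD] at p3
  rw [sinD, sinE] at p4
  have e1 : ((((k:ℝ) - 3/8) / 2 - 1 / (8 * Real.pi)) - (((k:ℝ) - 1/2) / 2 - 0 / (8 * Real.pi)))
      = 1/16 - 1/(8*Real.pi) := by ring
  have e2 : ((((k:ℝ) - 1/4) / 2 - 0 / (8 * Real.pi)) - (((k:ℝ) - 3/8) / 2 - 1 / (8 * Real.pi)))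
      = 1/16 + 1/(8*Real.pi) := by ring
  have e3 : ((((k:ℝ) - 1/8) / 2 - (-1) / (8 * Real.pi)) - (((k:ℝ) - 1/4) / 2 - 0 / (8 * Real.pi)))
      = 1/16 + 1/(8*Real.pi) := by ring
  have e4 : (((k:ℝ) / 2 - 0 / (8 * Real.pi)) - (((k:ℝ) - 1/8) / 2 - (-1) / (8 * Real.pi)))
      = 1/16 - 1/(8*Real.pi) := by ring
  rw [e1] at p1; rw [e2] at p2; rw [e3] at p3; rw [e4] at p4
  linarith

lemma hump_bound2 (k : ℤ) (hk : 1 ≤ k) :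
    (1/8) / (Real.pi * ((k:ℝ) - 1/4))^2 + (1/8) / (Real.pi * (k:ℝ))^2
    ≤ ∫ ξ in Set.Ioc ((k:ℝ) - 1/2) (k:ℝ), sincSq ξ := by
  have hk' : (1:ℝ) ≤ (k:ℝ) := by exact_mod_cast hk
  rw [Ioc_split _ ((k:ℝ) - 1/4) _ (by linarith) (by linarith)]
  have p1 := piece ((k:ℝ) - 1/2) ((k:ℝ) - 1/4) (by linarith) (by linarith)
  have p2 := piece ((k:ℝ) - 1/4) ((k:ℝ)) (by linarith) (by linarith)
  rw [sinA, sinC] at p1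
  rw [sinC, sinE] at p2
  have e1 : ((((k:ℝ) - 1/4) / 2 - 0 / (8 * Real.pi)) - (((k:ℝ) - 1/2) / 2 - 0 / (8 * Real.pi)))
      = 1/8 := by ring
  have e2 : (((k:ℝ) / 2 - 0 / (8 * Real.pi)) - (((k:ℝ) - 1/4) / 2 - 0 / (8 * Real.pi)))
      = 1/8 := by ring
  rw [e1] at p1; rw [e2] at p2
  linarith



lemma phi_pos_le (k : ℤ) (ξ : ℝ) (h1 : (k:ℝ) - 1/2 ≤ ξ) (h2 : ξ ≤ (k:ℝ)) (h3 : 0 < ξ) :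
    Real.sin (2 * Real.pi * ξ) / (Real.pi * ξ) ≤ 0 := by
  have hs : Real.sin (2 * Real.pi * ξ) ≤ 0 := by
    have heq : Real.sin (2 * Real.pi * ξ) = Real.sin (2 * Real.pi * ξ - k * (2 * Real.pi)) :=
      (Real.sin_sub_int_mul_two_pi _ k).symm
    rw [heq]
    set x := 2 * Real.pi * ξ - (k:ℝ) * (2 * Real.pi) with hx
    have hπ := Real.pi_pos
    have hx1 : -Real.pi ≤ x := by rw [hx]; nlinarith
    have hx2 : x ≤ 0 := by rw [hx]; nlinarith
    have := Real.sin_nonneg_of_nonneg_of_le_pi (x := -x) (by linarith) (by linarith)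
    rw [Real.sin_neg] at this; linarith
  have hp : 0 ≤ Real.pi * ξ := by positivity
  exact div_nonpos_of_nonpos_of_nonneg hs hp

lemma phi_neg_le (k : ℤ) (ξ : ℝ) (h1 : -(k:ℝ) ≤ ξ) (h2 : ξ ≤ -((k:ℝ) - 1/2)) (hk : 1 ≤ k) :
    Real.sin (2 * Real.pi * ξ) / (Real.pi * ξ) ≤ 0 := by
  have hk' : (1:ℝ) ≤ (k:ℝ) := by exact_mod_cast hk
  have heven : Real.sin (2 * Real.pi * ξ) / (Real.pi * ξ)
      = Real.sin (2 * Real.pi * (-ξ)) / (Real.pi * (-ξ)) := by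
    rw [mul_neg, mul_neg, Real.sin_neg, neg_div_neg_eq]
  rw [heven]
  exact phi_pos_le k (-ξ) (by linarith) (by linarith) (by linarith)

set_option maxHeartbeats 2000000 in
lemma numeric_bound :
    (1/10 : ℝ) ≤
    2 * (((1/16 - 1/(8*Real.pi)) / (Real.pi * ((1:ℝ) - 3/8))^2
      + (1/16 + 1/(8*Real.pi)) / (Real.pi * ((1:ℝ) - 1/4))^2
      + (1/16 + 1/(8*Real.pi)) / (Real.pi * ((1:ℝ) - 1/8))^2
      + (1/16 - 1/(8*Real.pi)) / (Real.pi * (1:ℝ))^2)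
    + ((1/16 - 1/(8*Real.pi)) / (Real.pi * ((2:ℝ) - 3/8))^2
      + (1/16 + 1/(8*Real.pi)) / (Real.pi * ((2:ℝ) - 1/4))^2
      + (1/16 + 1/(8*Real.pi)) / (Real.pi * ((2:ℝ) - 1/8))^2
      + (1/16 - 1/(8*Real.pi)) / (Real.pi * (2:ℝ))^2)
    + ((1/16 - 1/(8*Real.pi)) / (Real.pi * ((3:ℝ) - 3/8))^2
      + (1/16 + 1/(8*Real.pi)) / (Real.pi * ((3:ℝ) - 1/4))^2
      + (1/16 + 1/(8*Real.pi)) / (Real.pi * ((3:ℝ) - 1/8))^2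
      + (1/16 - 1/(8*Real.pi)) / (Real.pi * (3:ℝ))^2)
    + ((1/8) / (Real.pi * ((4:ℝ) - 1/4))^2 + (1/8) / (Real.pi * (4:ℝ))^2)) := by
  have hπ := Real.pi_pos
  have hπl := Real.pi_gt_d6
  have hπu := Real.pi_lt_d6
  have hexp : 2 * (((1/16 - 1/(8*Real.pi)) / (Real.pi * ((1:ℝ) - 3/8))^2
      + (1/16 + 1/(8*Real.pi)) / (Real.pi * ((1:ℝ) - 1/4))^2
      + (1/16 + 1/(8*Real.pi)) / (Real.pi * ((1:ℝ) - 1/8))^2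
      + (1/16 - 1/(8*Real.pi)) / (Real.pi * (1:ℝ))^2)
    + ((1/16 - 1/(8*Real.pi)) / (Real.pi * ((2:ℝ) - 3/8))^2
      + (1/16 + 1/(8*Real.pi)) / (Real.pi * ((2:ℝ) - 1/4))^2
      + (1/16 + 1/(8*Real.pi)) / (Real.pi * ((2:ℝ) - 1/8))^2
      + (1/16 - 1/(8*Real.pi)) / (Real.pi * (2:ℝ))^2)
    + ((1/16 - 1/(8*Real.pi)) / (Real.pi * ((3:ℝ) - 3/8))^2
      + (1/16 + 1/(8*Real.pi)) / (Real.pi * ((3:ℝ) - 1/4))^2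
      + (1/16 + 1/(8*Real.pi)) / (Real.pi * ((3:ℝ) - 1/8))^2
      + (1/16 - 1/(8*Real.pi)) / (Real.pi * (3:ℝ))^2)
    + ((1/8) / (Real.pi * ((4:ℝ) - 1/4))^2 + (1/8) / (Real.pi * (4:ℝ))^2))
      = ((56209435457 : ℝ)/51924100800 * Real.pi - 79006979939/636070234800) / Real.pi^3 := by
    field_simp
    ring
  rw [hexp, le_div_iff₀ (by positivity)]
  have h3 : Real.pi^3 ≤ (3.141593)^2 * Real.pi := by
    nlinarith [mul_pos (sub_pos.2 hπu) hπ]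
  nlinarith [h3]

theorem sinc_negative_mass :
    (1 / 10 : ℝ) ≤
      ∫ ξ in {ξ : ℝ | Real.sin (2 * Real.pi * ξ) / (Real.pi * ξ) ≤ 0},
        (Real.sin (2 * Real.pi * ξ) / (Real.pi * ξ)) ^ 2 := by
  set N := {ξ : ℝ | Real.sin (2 * Real.pi * ξ) / (Real.pi * ξ) ≤ 0} with hN
  show (1/10 : ℝ) ≤ ∫ ξ in N, sincSq ξ
  set I1 := Set.Ioc (-(4:ℝ)) (-(7/2)) with hI1
  set I2 := Set.Ioc (-(3:ℝ)) (-(5/2)) with hI2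
  set I3 := Set.Ioc (-(2:ℝ)) (-(3/2)) with hI3
  set I4 := Set.Ioc (-(1:ℝ)) (-(1/2)) with hI4
  set I5 := Set.Ioc ((1:ℝ)/2) 1 with hI5
  set I6 := Set.Ioc ((3:ℝ)/2) 2 with hI6
  set I7 := Set.Ioc ((5:ℝ)/2) 3 with hI7
  set I8 := Set.Ioc ((7:ℝ)/2) 4 with hI8
  have hd : ∀ {a b c d : ℝ}, b ≤ c → Disjoint (Set.Ioc a b) (Set.Ioc c d) := fun h =>
    Set.Ioc_disjoint_Ioc.mpr (le_trans (min_le_left _ _) (le_trans h (le_max_right _ _)))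
  have hsub : (((((((I1 ∪ I2) ∪ I3) ∪ I4) ∪ I5) ∪ I6) ∪ I7) ∪ I8) ⊆ N := by
    intro ξ hξ
    simp only [hI1, hI2, hI3, hI4, hI5, hI6, hI7, hI8, Set.mem_union, Set.mem_Ioc] at hξ
    simp only [hN, Set.mem_setOf_eq]
    rcases hξ with (((((((h | h) | h) | h) | h) | h) | h) | h)
    · exact phi_neg_le 4 ξ (by push_cast; linarith [h.1]) (by push_cast; linarith [h.2]) (by norm_num)
    · exact phi_neg_le 3 ξ (by push_cast; linarith [h.1]) (by push_cast; linarith [h.2]) (by norm_num)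
    · exact phi_neg_le 2 ξ (by push_cast; linarith [h.1]) (by push_cast; linarith [h.2]) (by norm_num)
    · exact phi_neg_le 1 ξ (by push_cast; linarith [h.1]) (by push_cast; linarith [h.2]) (by norm_num)
    · exact phi_pos_le 1 ξ (by push_cast; linarith [h.1]) (by push_cast; linarith [h.2]) (by linarith [h.1])
    · exact phi_pos_le 2 ξ (by push_cast; linarith [h.1]) (by push_cast; linarith [h.2]) (by linarith [h.1])
    · exact phi_pos_le 3 ξ (by push_cast; linarith [h.1]) (by push_cast; linarith [h.2]) (by linarith [h.1])
    · exact phi_pos_le 4 ξ (by push_cast; linarith [h.1]) (by push_cast; linarith [h.2]) (by linarith [h.1])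
  have hmono : (∫ ξ in (((((((I1 ∪ I2) ∪ I3) ∪ I4) ∪ I5) ∪ I6) ∪ I7) ∪ I8), sincSq ξ)
      ≤ ∫ ξ in N, sincSq ξ :=
    setIntegral_mono_set sincSq_integrable.integrableOn
      (Filter.Eventually.of_forall sincSq_nonneg) (HasSubset.Subset.eventuallyLE hsub)
  have hIOn : ∀ s : Set ℝ, IntegrableOn sincSq s := fun s => sincSq_integrable.integrableOn
  have hsplit : (∫ ξ in (((((((I1 ∪ I2) ∪ I3) ∪ I4) ∪ I5) ∪ I6) ∪ I7) ∪ I8), sincSq ξ)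
      = (∫ ξ in I1, sincSq ξ) + (∫ ξ in I2, sincSq ξ) + (∫ ξ in I3, sincSq ξ)
        + (∫ ξ in I4, sincSq ξ) + (∫ ξ in I5, sincSq ξ) + (∫ ξ in I6, sincSq ξ)
        + (∫ ξ in I7, sincSq ξ) + (∫ ξ in I8, sincSq ξ) := by
    have m : ∀ a b : ℝ, MeasurableSet (Set.Ioc a b) := fun a b => measurableSet_Ioc
    rw [setIntegral_union (by simp only [hI1, hI2, hI3, hI4, hI5, hI6, hI7, hI8,
          Set.disjoint_union_left]; refine ⟨⟨⟨⟨⟨⟨hd (by norm_num), hd (by norm_num)⟩,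
          hd (by norm_num)⟩, hd (by norm_num)⟩, hd (by norm_num)⟩, hd (by norm_num)⟩,
          hd (by norm_num)⟩) (hI8 ▸ m _ _) (hIOn _) (hIOn _),
        setIntegral_union (by simp only [hI1, hI2, hI3, hI4, hI5, hI6, hI7,
          Set.disjoint_union_left]; refine ⟨⟨⟨⟨⟨hd (by norm_num), hd (by norm_num)⟩,
          hd (by norm_num)⟩, hd (by norm_num)⟩, hd (by norm_num)⟩,
          hd (by norm_num)⟩) (hI7 ▸ m _ _) (hIOn _) (hIOn _),
        setIntegral_union (by simp only [hI1, hI2, hI3, hI4, hI5, hI6,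
          Set.disjoint_union_left]; refine ⟨⟨⟨⟨hd (by norm_num), hd (by norm_num)⟩,
          hd (by norm_num)⟩, hd (by norm_num)⟩, hd (by norm_num)⟩) (hI6 ▸ m _ _) (hIOn _) (hIOn _),
        setIntegral_union (by simp only [hI1, hI2, hI3, hI4, hI5,
          Set.disjoint_union_left]; refine ⟨⟨⟨hd (by norm_num), hd (by norm_num)⟩,
          hd (by norm_num)⟩, hd (by norm_num)⟩) (hI5 ▸ m _ _) (hIOn _) (hIOn _),
        setIntegral_union (by simp only [hI1, hI2, hI3, hI4,
          Set.disjoint_union_left]; refine ⟨⟨hd (by norm_num), hd (by norm_num)⟩,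
          hd (by norm_num)⟩) (hI4 ▸ m _ _) (hIOn _) (hIOn _),
        setIntegral_union (by simp only [hI1, hI2, hI3,
          Set.disjoint_union_left]; refine ⟨hd (by norm_num), hd (by norm_num)⟩)
          (hI3 ▸ m _ _) (hIOn _) (hIOn _),
        setIntegral_union (hd (by norm_num)) (hI2 ▸ m _ _) (hIOn _) (hIOn _)]
  -- negative humps equal positive humps
  have hn1 : (∫ ξ in I1, sincSq ξ) = ∫ ξ in Set.Ioc ((7:ℝ)/2) 4, sincSq ξ := by
    rw [hI1, hump_neg (7/2) 4 (by norm_num)]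
  have hn2 : (∫ ξ in I2, sincSq ξ) = ∫ ξ in Set.Ioc ((5:ℝ)/2) 3, sincSq ξ := by
    rw [hI2, hump_neg (5/2) 3 (by norm_num)]
  have hn3 : (∫ ξ in I3, sincSq ξ) = ∫ ξ in Set.Ioc ((3:ℝ)/2) 2, sincSq ξ := by
    rw [hI3, hump_neg (3/2) 2 (by norm_num)]
  have hn4 : (∫ ξ in I4, sincSq ξ) = ∫ ξ in Set.Ioc ((1:ℝ)/2) 1, sincSq ξ := by
    rw [hI4, hump_neg (1/2) 1 (by norm_num)]
  -- hump bounds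
  have hB1 := hump_bound4 1 le_rfl
  have hB2 := hump_bound4 2 (by norm_num)
  have hB3 := hump_bound4 3 (by norm_num)
  have hB4 := hump_bound2 4 (by norm_num)
  rw [show ((1:ℤ):ℝ) - 1/2 = 1/2 by norm_num, show ((1:ℤ):ℝ) = 1 by norm_num] at hB1
  rw [show ((2:ℤ):ℝ) - 1/2 = 3/2 by norm_num, show ((2:ℤ):ℝ) = 2 by norm_num] at hB2
  rw [show ((3:ℤ):ℝ) - 1/2 = 5/2 by norm_num, show ((3:ℤ):ℝ) = 3 by norm_num] at hB3
  rw [show ((4:ℤ):ℝ) - 1/2 = 7/2 by norm_num, show ((4:ℤ):ℝ) = 4 by norm_num] at hB4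
  have hnum := numeric_bound
  rw [hsplit, hn1, hn2, hn3, hn4] at hmono
  have h5 : (∫ ξ in Set.Ioc ((1:ℝ)/2) 1, sincSq ξ) = ∫ ξ in I5, sincSq ξ := by rw [hI5]
  have h6 : (∫ ξ in Set.Ioc ((3:ℝ)/2) 2, sincSq ξ) = ∫ ξ in I6, sincSq ξ := by rw [hI6]
  have h7 : (∫ ξ in Set.Ioc ((5:ℝ)/2) 3, sincSq ξ) = ∫ ξ in I7, sincSq ξ := by rw [hI7]
  have h8 : (∫ ξ in Set.Ioc ((7:ℝ)/2) 4, sincSq ξ) = ∫ ξ in I8, sincSq ξ := by rw [hI8]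
  linarith [hB1, hB2, hB3, hB4, hnum, hmono, h5, h6, h7, h8]
end

section
/- (Theorem 2, main bound) For every nonnegative f in L^1(ℝ) ∩ L^2(ℝ), min over t ∈ [0,1] of ∫_ℝ f(x) f(x+t) dx is at most 0.42 ‖f‖_{L^1}^2. Equivalently: if ∫_ℝ f(x) f(x+t) dx ≥ 1/2 for all t ∈ [0,1], then ‖f‖_{L^1} ≥ √(1 − inf_{x>0} sin(x)/x) ≈ 1.10328. -/
open MeasureTheory Real

noncomputable def shearEquiv : (ℝ × ℝ) ≃ᵐ (ℝ × ℝ) where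
  toFun p := (p.1, p.1 + p.2)
  invFun p := (p.1, p.2 - p.1)
  left_inv p := by simp
  right_inv p := by simp
  measurable_toFun := (measurable_fst.prodMk (measurable_fst.add measurable_snd))
  measurable_invFun := (measurable_fst.prodMk (measurable_snd.sub measurable_fst))

@[simp] lemma shearEquiv_apply (p : ℝ × ℝ) : shearEquiv p = (p.1, p.1 + p.2) := rfl

lemma shear_mp : MeasurePreserving (⇑shearEquiv)
    (volume.prod volume) (volume.prod volume) :=
  (MeasurePreserving.id volume).skew_product (measurable_fst.add measurable_snd)
    (Filter.Eventually.of_forall fun x => map_add_left_eq_self volume x)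

lemma integrable_mul_L2 {f g : ℝ → ℝ} (hf : MemLp f 2 (volume : Measure ℝ))
    (hg : MemLp g 2 (volume : Measure ℝ)) :
    Integrable (fun x => f x * g x) := by
  refine Integrable.mono' ((hf.integrable_sq.add hg.integrable_sq).const_mul (1/2))
    (hf.1.mul hg.1) (Filter.Eventually.of_forall fun x => ?_)
  rw [Real.norm_eq_abs, abs_mul]
  simp only [Pi.add_apply]
  nlinarith [sq_nonneg (|f x| - |g x|), sq_abs (f x), sq_abs (g x), abs_nonneg (f x),
    abs_nonneg (g x)]

section main
variable {f : ℝ → ℝ}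

lemma A_integrable (hf2 : MemLp f 2 (volume : Measure ℝ)) (t : ℝ) :
    Integrable (fun x => f x * f (x + t)) := by
  have : MemLp (fun x => f (x + t)) 2 (volume : Measure ℝ) :=
    hf2.comp_measurePreserving (measurePreserving_add_right (volume : Measure ℝ) t)
  exact integrable_mul_L2 hf2 this

lemma A_nonneg (hpos : ∀ x, 0 ≤ f x) (t : ℝ) : 0 ≤ ∫ x : ℝ, f x * f (x + t) :=
  integral_nonneg fun x => mul_nonneg (hpos x) (hpos _)

lemma A_even (hf2 : MemLp f 2 (volume : Measure ℝ)) (t : ℝ) :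
    (∫ x : ℝ, f x * f (x + -t)) = ∫ x : ℝ, f x * f (x + t) := by
  have h := integral_add_right_eq_self (μ := (volume : Measure ℝ)) (fun x => f x * f (x + -t)) t
  rw [← h]
  congr 1
  ext x
  have : x + t + -t = x := by ring
  rw [this, mul_comm]

lemma key_ineq (hpos : ∀ x, 0 ≤ f x) (hf1 : Integrable f)
    (hf2 : MemLp f 2 (volume : Measure ℝ)) (ξ c : ℝ)
    (hc : ∀ t ∈ Set.Icc (-1:ℝ) 1, c ≤ ∫ x : ℝ, f x * f (x + t)) :
    c * (∫ t in Set.Icc (-1:ℝ) 1, (1 - Real.cos (ξ * t))) ≤ (∫ x : ℝ, f x) ^ 2 := by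
  have hG : Integrable (fun p : ℝ × ℝ => f p.1 * f p.2) (volume.prod volume) :=
    hf1.mul_prod hf1
  have hF : Integrable (fun p : ℝ × ℝ => f p.1 * f (p.1 + p.2)) (volume.prod volume) :=
    (shear_mp.integrable_comp hG.aestronglyMeasurable).mpr hG
  set W : ℝ × ℝ → ℝ := fun p => f p.1 * f (p.1 + p.2) * (1 - Real.cos (ξ * p.2)) with hWdef
  have hWm : AEStronglyMeasurable W (volume.prod volume) :=
    hF.aestronglyMeasurable.mul
      ((continuous_const.sub (Real.continuous_cos.comp
        (continuous_const.mul continuous_snd))).aestronglyMeasurable)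
  have hW : Integrable W (volume.prod volume) := by
    refine Integrable.mono' (hF.norm.const_mul 2) hWm (Filter.Eventually.of_forall fun p => ?_)
    simp only [hWdef, Real.norm_eq_abs, norm_norm]
    have h1 : |1 - Real.cos (ξ * p.2)| ≤ 2 := by
      rw [abs_le]
      constructor <;> nlinarith [Real.cos_le_one (ξ * p.2), Real.neg_one_le_cos (ξ * p.2)]
    refine le_trans (le_of_eq (abs_mul _ _)) ?_
    have h2 := mul_le_mul_of_nonneg_left h1 (abs_nonneg (f p.1 * f (p.1 + p.2)))
    linarith
  have hCint : Integrable (fun x => f x * Real.cos (ξ * x)) := by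
    have := hf1.bdd_mul (c := 1)
      ((Real.continuous_cos.comp (continuous_const.mul continuous_id)).aestronglyMeasurable)
      (Filter.Eventually.of_forall fun x => by
        simpa [Real.norm_eq_abs] using Real.abs_cos_le_one (ξ * x))
    simpa [mul_comm] using this
  have hSint : Integrable (fun x => f x * Real.sin (ξ * x)) := by
    have := hf1.bdd_mul (c := 1)
      ((Real.continuous_sin.comp (continuous_const.mul continuous_id)).aestronglyMeasurable)
      (Filter.Eventually.of_forall fun x => by
        simpa [Real.norm_eq_abs] using Real.abs_sin_le_one (ξ * x))
    simpa [mul_comm] using this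
  set C := ∫ x : ℝ, f x * Real.cos (ξ * x)
  set S := ∫ x : ℝ, f x * Real.sin (ξ * x)
  have key_eq : (∫ p : ℝ × ℝ, W p ∂(volume.prod volume))
      = (∫ x : ℝ, f x) ^ 2 - (C ^ 2 + S ^ 2) := by
    have h1 : (∫ p : ℝ × ℝ, W p ∂(volume.prod volume))
        = ∫ q : ℝ × ℝ, f q.1 * f q.2 * (1 - Real.cos (ξ * (q.2 - q.1))) ∂(volume.prod volume) := by
      have h2 := MeasurePreserving.integral_comp shear_mp shearEquiv.measurableEmbedding
        (fun q : ℝ × ℝ => f q.1 * f q.2 * (1 - Real.cos (ξ * (q.2 - q.1))))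
      rw [← h2]
      congr 1
      ext p
      simp [hWdef, add_sub_cancel_left]
    have expand : ∀ q : ℝ × ℝ, f q.1 * f q.2 * (1 - Real.cos (ξ * (q.2 - q.1)))
        = f q.1 * f q.2 - ((f q.1 * Real.cos (ξ * q.1)) * (f q.2 * Real.cos (ξ * q.2))
          + (f q.1 * Real.sin (ξ * q.1)) * (f q.2 * Real.sin (ξ * q.2))) := by
      intro q
      have h : ξ * (q.2 - q.1) = ξ * q.2 - ξ * q.1 := by ring
      rw [h, Real.cos_sub]
      ring
    rw [h1]
    simp_rw [expand]
    have hsub := integral_sub hG ((hCint.mul_prod hCint).add (hSint.mul_prod hSint))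
    have hadd := integral_add (hCint.mul_prod hCint) (hSint.mul_prod hSint)
    have e1 := integral_prod_mul (μ := (volume : Measure ℝ)) (ν := (volume : Measure ℝ)) f f
    have e2 := integral_prod_mul (μ := (volume : Measure ℝ)) (ν := (volume : Measure ℝ))
      (fun x => f x * Real.cos (ξ * x)) (fun x => f x * Real.cos (ξ * x))
    have e3 := integral_prod_mul (μ := (volume : Measure ℝ)) (ν := (volume : Measure ℝ))
      (fun x => f x * Real.sin (ξ * x)) (fun x => f x * Real.sin (ξ * x))
    simp only [Pi.add_apply] at hsub hadd
    beta_reduce at e2 e3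
    rw [hsub, hadd, e1, e2, e3]
    ring
  have hAint : Integrable (fun t : ℝ => (∫ x : ℝ, f x * f (x + t)) * (1 - Real.cos (ξ * t))) := by
    have h := hW.integral_prod_right
    refine h.congr (Filter.Eventually.of_forall fun t => ?_)
    simp only [hWdef]
    rw [integral_mul_const]
  have hAnn : ∀ t : ℝ, 0 ≤ (∫ x : ℝ, f x * f (x + t)) * (1 - Real.cos (ξ * t)) := by
    intro t
    exact mul_nonneg (A_nonneg hpos t) (by nlinarith [Real.cos_le_one (ξ * t)])
  calc c * (∫ t in Set.Icc (-1:ℝ) 1, (1 - Real.cos (ξ * t)))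
      = ∫ t in Set.Icc (-1:ℝ) 1, c * (1 - Real.cos (ξ * t)) := (integral_const_mul c _).symm
    _ ≤ ∫ t in Set.Icc (-1:ℝ) 1, (∫ x : ℝ, f x * f (x + t)) * (1 - Real.cos (ξ * t)) := by
        refine setIntegral_mono_on
          ((continuous_const.mul (continuous_const.sub (Real.continuous_cos.comp
            (continuous_const.mul continuous_id)))).integrableOn_Icc)
          hAint.integrableOn measurableSet_Icc (fun t ht => ?_)
        exact mul_le_mul_of_nonneg_right (hc t ht) (by nlinarith [Real.cos_le_one (ξ * t)])
    _ ≤ ∫ t : ℝ, (∫ x : ℝ, f x * f (x + t)) * (1 - Real.cos (ξ * t)) :=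
        setIntegral_le_integral hAint (Filter.Eventually.of_forall hAnn)
    _ = ∫ p : ℝ × ℝ, W p ∂(volume.prod volume) := by
        rw [integral_prod_symm _ hW]
        congr 1
        ext t
        simp only [hWdef]
        rw [integral_mul_const]
    _ = (∫ x : ℝ, f x) ^ 2 - (C ^ 2 + S ^ 2) := key_eq
    _ ≤ (∫ x : ℝ, f x) ^ 2 := by nlinarith [sq_nonneg C, sq_nonneg S]

lemma J_eq (ξ : ℝ) (hξ : ξ ≠ 0) :
    (∫ t in Set.Icc (-1:ℝ) 1, (1 - Real.cos (ξ * t))) = 2 - 2 * Real.sin ξ / ξ := by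
  rw [MeasureTheory.integral_Icc_eq_integral_Ioc,
    ← intervalIntegral.integral_of_le (by norm_num : (-1:ℝ) ≤ 1)]
  have h1 : IntervalIntegrable (fun t => Real.cos (ξ * t)) volume (-1) 1 :=
    (Real.continuous_cos.comp (continuous_const.mul continuous_id)).intervalIntegrable _ _
  rw [intervalIntegral.integral_sub intervalIntegrable_const h1,
    intervalIntegral.integral_const, intervalIntegral.integral_comp_mul_left (f := Real.cos) hξ,
    integral_cos]
  simp only [mul_one, mul_neg_one, Real.sin_neg, smul_eq_mul]
  field_simp
  ring

end main

theorem theorem_two (f : ℝ → ℝ) (hpos : ∀ x, 0 ≤ f x) (hf1 : Integrable f)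
    (hf2 : MemLp f 2 (volume : Measure ℝ)) :
    (∃ t ∈ Set.Icc (0 : ℝ) 1, ∫ x : ℝ, f x * f (x + t) ≤ 0.42 * (∫ x : ℝ, f x) ^ 2) ∧
      ((∀ t ∈ Set.Icc (0 : ℝ) 1, (1 / 2 : ℝ) ≤ ∫ x : ℝ, f x * f (x + t)) →
        Real.sqrt (1 - sInf (Set.range fun x : ℝ => if x = 0 then 1 else Real.sin x / x)) ≤
          ∫ x : ℝ, f x) := by
  have hI : 0 ≤ ∫ x : ℝ, f x := integral_nonneg hpos
  constructor
  · by_contra hcon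
    push_neg at hcon
    have hc : ∀ t ∈ Set.Icc (-1:ℝ) 1, 0.42 * (∫ x : ℝ, f x) ^ 2 ≤ ∫ x : ℝ, f x * f (x + t) := by
      intro t ht
      rcases le_or_gt 0 t with h0 | h0
      · exact (hcon t ⟨h0, ht.2⟩).le
      · rw [← A_even hf2 t]
        exact (hcon (-t) ⟨by linarith, by linarith [ht.1]⟩).le
    have hk := key_ineq hpos hf1 hf2 (3 * Real.pi / 2) (0.42 * (∫ x : ℝ, f x) ^ 2) hc
    rw [J_eq _ (ne_of_gt (by positivity))] at hk
    have hs : Real.sin (3 * Real.pi / 2) = -1 := by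
      have h : 3 * Real.pi / 2 = Real.pi + Real.pi / 2 := by ring
      rw [h, Real.sin_add]
      simp
    rw [hs] at hk
    rcases eq_or_lt_of_le hI with h0 | h0
    · have hf0 : f =ᵐ[(volume : Measure ℝ)] 0 :=
        (integral_eq_zero_iff_of_nonneg hpos hf1).mp h0.symm
      have hA0 : (∫ x : ℝ, f x * f (x + 0)) = 0 := by
        apply integral_eq_zero_of_ae
        filter_upwards [hf0] with x hx
        simp [hx]
      have h01 := hcon 0 (by norm_num)
      rw [hA0] at h01
      nlinarith [h01]
    · have hI2 : 0 < (∫ x : ℝ, f x) ^ 2 := by positivity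
      have hπ : Real.pi < 3.15 := by linarith [Real.pi_lt_d2]
      have hπ3 : 3 < Real.pi := Real.pi_gt_three
      have hd4 : 4 / (3 * Real.pi) * (3 * Real.pi) = 4 :=
        div_mul_cancel₀ _ (by positivity)
      have hdpos : 0 < 4 / (3 * Real.pi) := by positivity
      have hrw : (2 : ℝ) - 2 * (-1) / (3 * Real.pi / 2) = 2 + 4 / (3 * Real.pi) := by
        field_simp
        ring
      rw [hrw] at hk
      have hgt : (1:ℝ) < 0.42 * (2 + 4 / (3 * Real.pi)) := by
        nlinarith [hd4, hdpos, hπ, Real.pi_pos]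
      have hlt := mul_lt_mul_of_pos_right hgt hI2
      nlinarith [hk, hlt]
  · intro hyp
    have hc : ∀ t ∈ Set.Icc (-1:ℝ) 1, (1/2 : ℝ) ≤ ∫ x : ℝ, f x * f (x + t) := by
      intro t ht
      rcases le_or_gt 0 t with h0 | h0
      · exact hyp t ⟨h0, ht.2⟩
      · rw [← A_even hf2 t]
        exact hyp (-t) ⟨by linarith, by linarith [ht.1]⟩
    have hbound : ∀ ξ : ℝ,
        1 - (if ξ = 0 then 1 else Real.sin ξ / ξ) ≤ (∫ x : ℝ, f x) ^ 2 := by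
      intro ξ
      by_cases hξ : ξ = 0
      · simp only [hξ, if_pos rfl]
        simp
        positivity
      · have hk := key_ineq hpos hf1 hf2 ξ (1/2) hc
        rw [J_eq _ hξ] at hk
        simp only [if_neg hξ]
        have hma : 2 * Real.sin ξ / ξ = 2 * (Real.sin ξ / ξ) := mul_div_assoc _ _ _
        rw [hma] at hk
        linarith
    have hsinf : 1 - (∫ x : ℝ, f x) ^ 2 ≤
        sInf (Set.range fun x : ℝ => if x = 0 then 1 else Real.sin x / x) := by
      apply le_csInf ⟨_, Set.mem_range_self 0⟩
      rintro b ⟨ξ, rfl⟩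
      linarith [hbound ξ]
    calc Real.sqrt (1 - sInf (Set.range fun x : ℝ => if x = 0 then 1 else Real.sin x / x))
        ≤ Real.sqrt ((∫ x : ℝ, f x) ^ 2) := Real.sqrt_le_sqrt (by linarith)
      _ = ∫ x : ℝ, f x := Real.sqrt_sq hI
end

section
/- The infimum of sin(x)/x over x ∈ ℝ (with value 1 at 0) lies in the interval (−0.2173, −0.2172); in particular it is strictly between −1/4 and −1/5. -/
open Real Set

lemma sin_ge_taylor (x : ℝ) (hx : 0 ≤ x) : x - x^3/6 ≤ Real.sin x := by
  have key : MonotoneOn (fun u : ℝ => Real.sin u - (u - u^3/6)) (Set.Ici 0) := by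
    apply monotoneOn_of_deriv_nonneg (convex_Ici 0)
    · fun_prop
    · fun_prop
    · intro u _
      have h1 : HasDerivAt (fun u : ℝ => u^3) (3*u^2) u := by
        simpa using hasDerivAt_pow 3 u
      have hd : HasDerivAt (fun u : ℝ => Real.sin u - (u - u^3/6))
          (Real.cos u - (1 - 3*u^2/6)) u :=
        (Real.hasDerivAt_sin u).sub ((hasDerivAt_id u).sub (h1.div_const 6))
      rw [hd.deriv]
      nlinarith [Real.one_sub_sq_div_two_le_cos (x := u)]
  have h := key Set.self_mem_Ici (Set.mem_Ici.2 hx) hx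
  simp only [Real.sin_zero] at h
  linarith

lemma cos_le_taylor (x : ℝ) (hx : 0 ≤ x) : Real.cos x ≤ 1 - x^2/2 + x^4/24 := by
  have key : MonotoneOn (fun u : ℝ => (1 - u^2/2 + u^4/24) - Real.cos u) (Set.Ici 0) := by
    apply monotoneOn_of_deriv_nonneg (convex_Ici 0)
    · fun_prop
    · fun_prop
    · intro u hu
      have hu0 : (0:ℝ) ≤ u := le_of_lt (by simpa using hu)
      have h2 : HasDerivAt (fun u : ℝ => u^2) (2*u) u := by
        simpa using hasDerivAt_pow 2 u
      have h4 : HasDerivAt (fun u : ℝ => u^4) (4*u^3) u := by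
        simpa using hasDerivAt_pow 4 u
      have hd : HasDerivAt (fun u : ℝ => (1 - u^2/2 + u^4/24) - Real.cos u)
          ((0 - 2*u/2 + 4*u^3/24) - (-Real.sin u)) u :=
        (((hasDerivAt_const u (1:ℝ)).sub (h2.div_const 2)).add (h4.div_const 24)).sub
          (Real.hasDerivAt_cos u)
      rw [hd.deriv]
      nlinarith [sin_ge_taylor u hu0]
  have h := key Set.self_mem_Ici (Set.mem_Ici.2 hx) hx
  simp only [Real.cos_zero] at h
  linarith

lemma sin_le_taylor (x : ℝ) (hx : 0 ≤ x) : Real.sin x ≤ x - x^3/6 + x^5/120 := by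
  have key : MonotoneOn (fun u : ℝ => (u - u^3/6 + u^5/120) - Real.sin u) (Set.Ici 0) := by
    apply monotoneOn_of_deriv_nonneg (convex_Ici 0)
    · fun_prop
    · fun_prop
    · intro u hu
      have hu0 : (0:ℝ) ≤ u := le_of_lt (by simpa using hu)
      have h3 : HasDerivAt (fun u : ℝ => u^3) (3*u^2) u := by
        simpa using hasDerivAt_pow 3 u
      have h5 : HasDerivAt (fun u : ℝ => u^5) (5*u^4) u := by
        simpa using hasDerivAt_pow 5 u
      have hd : HasDerivAt (fun u : ℝ => (u - u^3/6 + u^5/120) - Real.sin u)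
          ((1 - 3*u^2/6 + 5*u^4/120) - Real.cos u) u :=
        (((hasDerivAt_id u).sub (h3.div_const 6)).add (h5.div_const 120)).sub
          (Real.hasDerivAt_sin u)
      rw [hd.deriv]
      nlinarith [cos_le_taylor u hu0]
  have h := key Set.self_mem_Ici (Set.mem_Ici.2 hx) hx
  simp only [Real.sin_zero] at h
  linarith

lemma pi_gt' : (3.141592 : ℝ) < π := Real.pi_gt_d6
lemma pi_lt' : π < (3.141593 : ℝ) := Real.pi_lt_d6

-- numeric bounds on sin and cos at 4.4934
lemma num_bounds :
    (-0.976118 : ℝ) ≤ Real.sin 4.4934 ∧ Real.sin 4.4934 ≤ -0.976021 ∧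
    (-0.2172435 : ℝ) ≤ Real.cos 4.4934 ∧ Real.cos 4.4934 ≤ -0.217237 := by
  set u : ℝ := 3*π/2 - 4.4934 with hu
  have hu1 : (0.218988:ℝ) < u := by rw [hu]; nlinarith [pi_gt']
  have hu2 : u < (0.2189895:ℝ) := by rw [hu]; nlinarith [pi_lt']
  have hu0 : (0:ℝ) < u := lt_trans (by norm_num) hu1
  have hid : (4.4934:ℝ) = (π/2 - u) + π := by rw [hu]; ring
  have hs : Real.sin 4.4934 = -Real.cos u := by
    rw [hid, Real.sin_add_pi, Real.sin_pi_div_two_sub]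
  have hc : Real.cos 4.4934 = -Real.sin u := by
    rw [hid, Real.cos_add_pi, Real.cos_pi_div_two_sub]
  have hp2 : u^2 ≤ (0.2189895:ℝ)^2 := pow_le_pow_left₀ hu0.le hu2.le 2
  have hp2' : (0.218988:ℝ)^2 ≤ u^2 := pow_le_pow_left₀ (by norm_num) hu1.le 2
  have hp3 : u^3 ≤ (0.2189895:ℝ)^3 := pow_le_pow_left₀ hu0.le hu2.le 3
  have hp3' : (0.218988:ℝ)^3 ≤ u^3 := pow_le_pow_left₀ (by norm_num) hu1.le 3
  have hp4 : u^4 ≤ (0.2189895:ℝ)^4 := pow_le_pow_left₀ hu0.le hu2.le 4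
  have hp5 : u^5 ≤ (0.2189895:ℝ)^5 := pow_le_pow_left₀ hu0.le hu2.le 5
  have hsin_lo : (0.217237:ℝ) ≤ Real.sin u := by
    nlinarith [sin_ge_taylor u hu0.le]
  have hsin_hi : Real.sin u ≤ (0.2172435:ℝ) := by
    nlinarith [sin_le_taylor u hu0.le]
  have hcos_hi : Real.cos u ≤ (0.976118:ℝ) := by
    nlinarith [cos_le_taylor u hu0.le]
  have hcos_lo : (0.976021:ℝ) ≤ Real.cos u := by
    nlinarith [Real.one_sub_sq_div_two_le_cos (x := u)]
  refine ⟨by rw [hs]; linarith, by rw [hs]; linarith, by rw [hc]; linarith, by rw [hc]; linarith⟩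

-- tangent line bound on [π, 4.6024]
lemma tangent_bound (x : ℝ) (h1 : π ≤ x) (h2 : x ≤ 4.6024) :
    Real.sin 4.4934 + Real.cos 4.4934 * (x - 4.4934) ≤ Real.sin x := by
  have hπlt : π < 4.4934 := by nlinarith [pi_lt']
  have h2π : (4.6024:ℝ) ≤ 2*π := by nlinarith [pi_gt']
  have coscmp : ∀ y z : ℝ, π ≤ y → y ≤ z → z ≤ 2*π → Real.cos y ≤ Real.cos z := by
    intro y z hy hyz hz
    have e1 : Real.cos y = -Real.cos (y - π) := by
      rw [show y = (y - π) + π by ring, Real.cos_add_pi]; ring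
    have e2 : Real.cos z = -Real.cos (z - π) := by
      rw [show z = (z - π) + π by ring, Real.cos_add_pi]; ring
    rw [e1, e2]
    have := Real.cos_le_cos_of_nonneg_of_le_pi (x := y - π) (y := z - π)
      (by linarith) (by linarith) (by linarith)
    linarith
  set F : ℝ → ℝ := fun t => Real.sin t - Real.cos 4.4934 * t with hF
  have hderiv : ∀ t : ℝ, HasDerivAt F (Real.cos t - Real.cos 4.4934) t := by
    intro t
    have := (Real.hasDerivAt_sin t).sub ((hasDerivAt_id t).const_mul (Real.cos 4.4934))
    exact this.congr_deriv (by simp)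
  have hanti : AntitoneOn F (Set.Icc π 4.4934) := by
    apply antitoneOn_of_deriv_nonpos (convex_Icc _ _)
    · exact fun t _ => ((hderiv t).continuousAt).continuousWithinAt
    · exact fun t _ => ((hderiv t).differentiableAt).differentiableWithinAt
    · intro t ht
      rw [interior_Icc] at ht
      rw [(hderiv t).deriv]
      have := coscmp t 4.4934 ht.1.le ht.2.le (by linarith [pi_lt'])
      linarith
  have hmono : MonotoneOn F (Set.Icc (4.4934:ℝ) 4.6024) := by
    apply monotoneOn_of_deriv_nonneg (convex_Icc _ _)
    · exact fun t _ => ((hderiv t).continuousAt).continuousWithinAt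
    · exact fun t _ => ((hderiv t).differentiableAt).differentiableWithinAt
    · intro t ht
      rw [interior_Icc] at ht
      rw [(hderiv t).deriv]
      have := coscmp 4.4934 t hπlt.le ht.1.le (by linarith [ht.2, h2π])
      linarith
  have hFx : F 4.4934 ≤ F x := by
    rcases le_or_gt x 4.4934 with hx | hx
    · exact hanti ⟨h1, hx⟩ ⟨hπlt.le, le_refl _⟩ hx
    · exact hmono ⟨le_refl _, by linarith⟩ ⟨hx.le, h2⟩ hx.le
  simp only [hF] at hFx
  nlinarith [hFx]

lemma key1 (x : ℝ) (hx : 0 < x) : -0.21728 * x ≤ Real.sin x := by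
  obtain ⟨hsa, hsa', hca, hca'⟩ := num_bounds
  rcases le_or_gt x π with h | h
  · have := Real.sin_nonneg_of_nonneg_of_le_pi hx.le h
    nlinarith
  · rcases le_or_gt x 4.6024 with h2 | h2
    · have ht := tangent_bound x h.le h2
      have hxπ : (3.141592:ℝ) ≤ x := by nlinarith [pi_gt']
      have hprod : 0 ≤ (Real.cos 4.4934 + 0.21728) * (x - 3.141592) :=
        mul_nonneg (by linarith) (by linarith)
      nlinarith [hprod]
    · have := Real.neg_one_le_sin x
      nlinarith

lemma key2 (x : ℝ) : (-0.21728 : ℝ) ≤ (if x = 0 then 1 else Real.sin x / x) := by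
  rcases eq_or_ne x 0 with h | h
  · simp [h]; norm_num
  · rw [if_neg h]
    rcases lt_or_gt_of_ne h with hneg | hpos
    · have hy : (0:ℝ) < -x := by linarith
      have := key1 (-x) hy
      rw [show Real.sin x / x = Real.sin (-x) / (-x) by rw [Real.sin_neg]; ring]
      rw [le_div_iff₀ hy]
      linarith
    · have := key1 x hpos
      rw [le_div_iff₀ hpos]
      linarith

theorem sinc_inf_bounds :
    sInf (Set.range fun x : ℝ => if x = 0 then 1 else Real.sin x / x) ∈
        Set.Ioo (-0.2173 : ℝ) (-0.2172) ∧
      (-(1/4) : ℝ) < sInf (Set.range fun x : ℝ => if x = 0 then 1 else Real.sin x / x) ∧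
      sInf (Set.range fun x : ℝ => if x = 0 then 1 else Real.sin x / x) < -(1/5) := by
  set f : ℝ → ℝ := fun x : ℝ => if x = 0 then 1 else Real.sin x / x with hf
  have hne : (Set.range f).Nonempty := ⟨f 0, 0, rfl⟩
  have hbdd : BddBelow (Set.range f) := by
    refine ⟨-0.21728, ?_⟩
    rintro y ⟨x, rfl⟩
    exact key2 x
  have hlow : (-0.21728:ℝ) ≤ sInf (Set.range f) := by
    apply le_csInf hne
    rintro y ⟨x, rfl⟩
    exact key2 x
  have hupp : sInf (Set.range f) ≤ f 4.4934 := csInf_le hbdd ⟨4.4934, rfl⟩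
  have hwit : f 4.4934 < -0.2172 := by
    obtain ⟨_, hsa', _, _⟩ := num_bounds
    have hfe : f 4.4934 = Real.sin 4.4934 / 4.4934 := by
      rw [hf]; norm_num
    rw [hfe, div_lt_iff₀ (by norm_num : (0:ℝ) < 4.4934)]
    nlinarith
  refine ⟨⟨by linarith, by linarith⟩, by linarith, by linarith⟩
end

section
/- Let f(x) = χ_{(−1/2,1/2)}(x)/√(1−4x²) be the arcsine density. Then for every t with 0 < t < 1, ∫_ℝ f(x) f(x+t) dx ≥ π/4. -/
open MeasureTheory

theorem arcsine_autocorr_lower (f : ℝ → ℝ)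
    (hf : f = Set.indicator (Set.Ioo (-(1/2) : ℝ) (1/2))
      (fun x => 1 / Real.sqrt (1 - 4 * x ^ 2))) :
    ∀ t : ℝ, 0 < t → t < 1 → Real.pi / 4 ≤ ∫ x : ℝ, f x * f (x + t) := by
  intro t ht0 ht1
  set a : ℝ := -(1/2) with ha
  set b : ℝ := 1/2 - t with hb
  have hab : a < b := by rw [ha, hb]; linarith
  set c : ℝ := 1 - t with hc
  have hc0 : 0 < c := by rw [hc]; linarith
  -- the comparison density
  set g : ℝ → ℝ := fun x => 1 / Real.sqrt (c^2 - (2*x + t)^2) with hg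
  set φ : ℝ → ℝ := fun x => (1/2) * Real.arcsin ((2*x + t)/c) with hφ
  -- nonnegativity of f
  have hf_nonneg : ∀ x, 0 ≤ f x := by
    intro x
    rw [hf]
    apply Set.indicator_nonneg
    intro y _
    positivity
  -- measurability
  have hmf : Measurable f := by
    rw [hf]
    apply Measurable.indicator _ measurableSet_Ioo
    fun_prop
  have hmF : Measurable fun x => f x * f (x + t) :=
    hmf.mul (hmf.comp (measurable_id.add_const t))
  -- basic facts on the interval
  have hQpos : ∀ x ∈ Set.Ioo a b, 0 < c^2 - (2*x + t)^2 := by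
    intro x hx
    obtain ⟨hx1, hx2⟩ := hx
    rw [ha] at hx1; rw [hb] at hx2; rw [hc]
    nlinarith [mul_pos (show (0:ℝ) < 1 - 2*x - 2*t by linarith)
      (show (0:ℝ) < 1 + 2*x by linarith)]
  have hgpos : ∀ x ∈ Set.Ioo a b, 0 ≤ g x := by
    intro x hx
    rw [hg]
    positivity
  -- derivative of φ is g on the open interval
  have hderiv : ∀ x ∈ Set.Ioo a b, HasDerivAt φ (g x) x := by
    intro x hx
    have hQ := hQpos x hx
    obtain ⟨hx1, hx2⟩ := hx
    rw [ha] at hx1; rw [hb] at hx2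
    have hu1 : (2*x + t)/c ≠ -1 := by
      intro h
      rw [div_eq_iff hc0.ne'] at h
      rw [hc] at h; nlinarith
    have hu2 : (2*x + t)/c ≠ 1 := by
      intro h
      rw [div_eq_iff hc0.ne'] at h
      rw [hc] at h; nlinarith
    have hinner : HasDerivAt (fun x : ℝ => (2*x + t)/c) (2/c) x := by
      have : HasDerivAt (fun x : ℝ => 2*x + t) 2 x := by
        simpa using ((hasDerivAt_id x).const_mul (2:ℝ)).add_const t
      simpa using this.div_const c
    have harc := (Real.hasDerivAt_arcsin hu1 hu2).comp x hinner
    have := harc.const_mul (1/2 : ℝ)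
    refine this.congr_deriv (Eq.symm ?_)
    rw [hg]
    have hsq : Real.sqrt (1 - ((2*x + t)/c)^2)
        = Real.sqrt (c^2 - (2*x + t)^2) / c := by
      rw [show 1 - ((2*x + t)/c)^2 = (c^2 - (2*x + t)^2) / c^2 by
        field_simp]
      rw [Real.sqrt_div hQ.le, Real.sqrt_sq hc0.le]
    rw [hsq]
    have hs : 0 < Real.sqrt (c^2 - (2*x + t)^2) := Real.sqrt_pos.mpr hQ
    field_simp
  -- integrability of g on (a, b]
  have hcont : ContinuousOn φ (Set.Icc a b) := by
    apply Continuous.continuousOn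
    rw [hφ]
    exact continuous_const.mul (Real.continuous_arcsin.comp
      (((continuous_const.mul continuous_id).add continuous_const).div_const c))
  have hgint : IntegrableOn g (Set.Ioc a b) :=
    intervalIntegral.integrableOn_deriv_of_nonneg hcont hderiv hgpos
  have hgint' : IntervalIntegrable g volume a b := by
    rw [intervalIntegrable_iff_integrableOn_Ioc_of_le hab.le]
    exact hgint
  -- value of the integral of g
  have hval : ∫ x in a..b, g x = Real.pi / 2 := by
    rw [intervalIntegral.integral_eq_sub_of_hasDeriv_right_of_le hab.le hcont
      (fun x hx => (hderiv x hx).hasDerivWithinAt) hgint']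
    rw [hφ]
    have h1 : (2*b + t)/c = 1 := by rw [hb, hc, div_eq_iff (sub_ne_zero.mpr ht1.ne')]; ring
    have h2 : (2*a + t)/c = -1 := by rw [ha, hc, div_eq_iff (sub_ne_zero.mpr ht1.ne')]; ring
    simp only [h1, h2, Real.arcsin_one, Real.arcsin_neg, Real.arcsin_one]
    ring
  -- the minorant H
  set H : ℝ → ℝ := Set.indicator (Set.Ioo a b) (fun x => (1/2) * g x) with hH
  have hHint : Integrable H := by
    rw [hH]
    have h1 : IntegrableOn (fun x => (1/2 : ℝ) * g x) (Set.Ioo a b) :=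
      Integrable.const_mul (hgint.mono_set Set.Ioo_subset_Ioc_self) (1/2)
    exact h1.integrable_indicator measurableSet_Ioo
  have hHval : ∫ x, H x = Real.pi / 4 := by
    rw [hH, integral_indicator measurableSet_Ioo]
    rw [← integral_Ioc_eq_integral_Ioo, ← intervalIntegral.integral_of_le hab.le]
    rw [intervalIntegral.integral_const_mul, hval]
    ring
  -- pointwise facts on the interval
  have hkey : ∀ x ∈ Set.Ioo a b,
      f x * f (x + t) = 1 / Real.sqrt (((1+t)^2 - (2*x+t)^2) * (c^2 - (2*x+t)^2)) := by
    intro x hx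
    have hQ := hQpos x hx
    obtain ⟨hx1, hx2⟩ := hx
    rw [ha] at hx1; rw [hb] at hx2
    have hxmem : x ∈ Set.Ioo (-(1/2) : ℝ) (1/2) := ⟨hx1, by linarith⟩
    have hxtmem : x + t ∈ Set.Ioo (-(1/2) : ℝ) (1/2) := ⟨by linarith, by linarith⟩
    rw [hf, Set.indicator_of_mem hxmem, Set.indicator_of_mem hxtmem]
    have h1 : (0:ℝ) < 1 - 4 * x^2 := by nlinarith
    have h2 : (0:ℝ) < 1 - 4 * (x+t)^2 := by nlinarith
    rw [div_mul_div_comm, one_mul, ← Real.sqrt_mul h1.le]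
    congr 2
    rw [hc]; ring
  have hPle4 : ∀ x : ℝ, (1+t)^2 - (2*x+t)^2 ≤ 4 := fun x => by nlinarith [sq_nonneg (2*x+t)]
  have hPge : ∀ x ∈ Set.Ioo a b, 4*t^2 ≤ (1+t)^2 - (2*x+t)^2 := by
    intro x hx
    obtain ⟨hx1, hx2⟩ := hx
    rw [ha] at hx1; rw [hb] at hx2
    nlinarith [mul_pos (show (0:ℝ) < 1 - 2*x - 2*t by linarith)
      (show (0:ℝ) < 1 + 2*x by linarith)]
  -- lower bound: H ≤ F
  have hle : ∀ x, H x ≤ f x * f (x + t) := by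
    intro x
    by_cases hx : x ∈ Set.Ioo a b
    · rw [hH, Set.indicator_of_mem hx, hkey x hx]
      have hQ := hQpos x hx
      have hP4 := hPle4 x
      have hP0 : (0:ℝ) < (1+t)^2 - (2*x+t)^2 := lt_of_lt_of_le (by positivity) (hPge x hx)
      have hs1 : Real.sqrt (((1+t)^2 - (2*x+t)^2) * (c^2 - (2*x+t)^2))
          ≤ 2 * Real.sqrt (c^2 - (2*x+t)^2) := by
        have : ((1+t)^2 - (2*x+t)^2) * (c^2 - (2*x+t)^2) ≤ 4 * (c^2 - (2*x+t)^2) :=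
          mul_le_mul_of_nonneg_right hP4 hQ.le
        calc Real.sqrt (((1+t)^2 - (2*x+t)^2) * (c^2 - (2*x+t)^2))
            ≤ Real.sqrt (4 * (c^2 - (2*x+t)^2)) := Real.sqrt_le_sqrt this
          _ = 2 * Real.sqrt (c^2 - (2*x+t)^2) := by
              rw [show (4:ℝ) = 2^2 by norm_num, Real.sqrt_mul (by positivity),
                Real.sqrt_sq (by norm_num : (0:ℝ) ≤ 2)]
      have hspos : 0 < Real.sqrt (((1+t)^2 - (2*x+t)^2) * (c^2 - (2*x+t)^2)) :=
        Real.sqrt_pos.mpr (by positivity)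
      have hsq : 0 < Real.sqrt (c^2 - (2*x+t)^2) := Real.sqrt_pos.mpr hQ
      rw [hg]
      rw [show (1:ℝ)/2 * (1 / Real.sqrt (c^2 - (2*x+t)^2))
        = 1 / (2 * Real.sqrt (c^2 - (2*x+t)^2)) by field_simp]
      exact one_div_le_one_div_of_le hspos hs1
    · rw [hH, Set.indicator_of_notMem hx]
      exact mul_nonneg (hf_nonneg x) (hf_nonneg (x + t))
  -- F vanishes outside the interval
  have hFzero : ∀ x, x ∉ Set.Ioo a b → f x * f (x + t) = 0 := by
    intro x hx
    rw [Set.mem_Ioo, not_and_or, not_lt, not_lt] at hx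
    rcases hx with hx | hx
    · have : x ∉ Set.Ioo (-(1/2) : ℝ) (1/2) := by
        rw [Set.mem_Ioo, not_and_or, not_lt]; left; rw [ha] at hx; exact hx
      rw [hf, Set.indicator_of_notMem this, zero_mul]
    · have : x + t ∉ Set.Ioo (-(1/2) : ℝ) (1/2) := by
        rw [Set.mem_Ioo, not_and_or]; right; rw [not_lt]; rw [hb] at hx; linarith
      rw [hf, Set.indicator_of_notMem this, mul_zero]
  -- upper bound: F ≤ (1/t) * H  (for integrability)
  have hub : ∀ x, f x * f (x + t) ≤ (1/t) * H x := by
    intro x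
    by_cases hx : x ∈ Set.Ioo a b
    · rw [hH, Set.indicator_of_mem hx, hkey x hx]
      have hQ := hQpos x hx
      have hPg := hPge x hx
      have hsq : 0 < Real.sqrt (c^2 - (2*x+t)^2) := Real.sqrt_pos.mpr hQ
      have hs1 : 2 * t * Real.sqrt (c^2 - (2*x+t)^2)
          ≤ Real.sqrt (((1+t)^2 - (2*x+t)^2) * (c^2 - (2*x+t)^2)) := by
        have : (4*t^2) * (c^2 - (2*x+t)^2) ≤ ((1+t)^2 - (2*x+t)^2) * (c^2 - (2*x+t)^2) :=
          mul_le_mul_of_nonneg_right hPg hQ.le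
        calc 2 * t * Real.sqrt (c^2 - (2*x+t)^2)
            = Real.sqrt ((4*t^2) * (c^2 - (2*x+t)^2)) := by
              rw [show (4:ℝ)*t^2 = (2*t)^2 by ring, Real.sqrt_mul (by positivity),
                Real.sqrt_sq (by positivity)]
          _ ≤ _ := Real.sqrt_le_sqrt this
      have hspos : 0 < 2 * t * Real.sqrt (c^2 - (2*x+t)^2) := by positivity
      rw [hg]
      rw [show (1:ℝ)/t * ((1:ℝ)/2 * (1 / Real.sqrt (c^2 - (2*x+t)^2)))
        = 1 / (2 * t * Real.sqrt (c^2 - (2*x+t)^2)) by field_simp]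
      exact one_div_le_one_div_of_le hspos hs1
    · rw [hFzero x hx, hH, Set.indicator_of_notMem hx, mul_zero]
  -- integrability of F
  have hFint : Integrable fun x => f x * f (x + t) := by
    apply Integrable.mono (hHint.const_mul (1/t)) hmF.aestronglyMeasurable
    filter_upwards with x
    rw [Real.norm_eq_abs, Real.norm_eq_abs,
      abs_of_nonneg (mul_nonneg (hf_nonneg x) (hf_nonneg (x+t)))]
    exact (hub x).trans (le_abs_self _)
  calc Real.pi / 4 = ∫ x, H x := hHval.symm
    _ ≤ ∫ x, f x * f (x + t) := integral_mono hHint hFint hle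
end
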